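/- Let f : [0,∞) → ℝ be a bounded continuous function whose derivative f' exists and is bounded on [0,∞). Then for any c > 0, ∫₀^∞ (f(t)² + f'(t)²) e^{-ct} dt ≥ f(0)²/(c+1). -/

import Mathlib

open MeasureTheory Set Real Filter

set_option maxHeartbeats 1000000 in
theorem cauchy_gap_derivative_lemma
    (f f' : ℝ → ℝ) (c : ℝ) (hc : 0 < c)
    (hf_cont : ContinuousOn f (Ici 0))
    (hf_bdd : ∃ M, ∀ t ∈ Ici (0:ℝ), |f t| ≤ M)
    (hderiv : ∀ t ∈ Ici (0:ℝ), HasDerivAt f (f' t) t)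
    (hf'_bdd : ∃ M, ∀ t ∈ Ici (0:ℝ), |f' t| ≤ M) :
    ∫ t in Ioi (0:ℝ), (f t ^ 2 + f' t ^ 2) * Real.exp (-c * t)
      ≥ f 0 ^ 2 / (c + 1) := by
  obtain ⟨M, hM⟩ := hf_bdd
  obtain ⟨M', hM'⟩ := hf'_bdd
  have hM0 : 0 ≤ M := le_trans (abs_nonneg _) (hM 0 self_mem_Ici)
  have hM'0 : 0 ≤ M' := le_trans (abs_nonneg _) (hM' 0 self_mem_Ici)
  set g : ℝ → ℝ := fun t => f t ^ 2 * Real.exp (-c * t) with hgdef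
  set g' : ℝ → ℝ := fun t => (2 * f t * f' t - c * f t ^ 2) * Real.exp (-c * t) with hg'def
  -- derivative of g
  have hgderiv : ∀ t ∈ Ioi (0:ℝ), HasDerivAt g (g' t) t := by
    intro t ht
    have h1 : HasDerivAt (fun t => f t ^ 2) (2 * f t * f' t) t := by
      have := (hderiv t (mem_Ici.mpr (le_of_lt ht))).pow 2
      refine this.congr_deriv ?_
      push_cast
      ring
    have h2 : HasDerivAt (fun t => Real.exp (-c * t)) (-c * Real.exp (-c * t)) t := by
      have := ((hasDerivAt_id' t).const_mul (-c)).exp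
      convert this using 1
      simp [id_eq]
      ring
    have := h1.mul h2
    refine this.congr_deriv ?_
    simp only [hg'def]
    ring
  -- measurability
  have hfm : AEStronglyMeasurable f (volume.restrict (Ioi (0:ℝ))) :=
    (hf_cont.mono Ioi_subset_Ici_self).aestronglyMeasurable measurableSet_Ioi
  have hf'm : AEStronglyMeasurable f' (volume.restrict (Ioi (0:ℝ))) := by
    have hd : (deriv f) =ᵐ[volume.restrict (Ioi (0:ℝ))] f' := by
      rw [EventuallyEq, ae_restrict_iff' measurableSet_Ioi]
      exact Filter.Eventually.of_forall fun t ht => (hderiv t (mem_Ici.mpr (le_of_lt ht))).deriv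
    exact ((measurable_deriv f).aestronglyMeasurable).congr hd
  have hexpm : AEStronglyMeasurable (fun t => Real.exp (-c * t))
      (volume.restrict (Ioi (0:ℝ))) :=
    (Real.continuous_exp.comp (continuous_const.mul continuous_id)).aestronglyMeasurable
  -- integrability of g'
  have hg'm : AEStronglyMeasurable g' (volume.restrict (Ioi (0:ℝ))) := by
    exact ((((hfm.const_mul 2).mul hf'm).sub ((hfm.pow 2).const_mul c)).mul hexpm)
  have habs : ∀ t : ℝ, t ∈ Ioi (0:ℝ) →
      |2 * f t * f' t - c * f t ^ 2| ≤ 2 * (M * M') + c * M ^ 2 := by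
    intro t ht
    have h1 : |f t| ≤ M := hM t (mem_Ici.mpr (le_of_lt ht))
    have h2 : |f' t| ≤ M' := hM' t (mem_Ici.mpr (le_of_lt ht))
    have e1 : |f t * f' t| ≤ M * M' := by
      rw [abs_mul]; exact mul_le_mul h1 h2 (abs_nonneg _) hM0
    have e2 : f t ^ 2 ≤ M ^ 2 := by
      calc f t ^ 2 = |f t| ^ 2 := (sq_abs _).symm
        _ ≤ M ^ 2 := pow_le_pow_left₀ (abs_nonneg _) h1 2
    have e3 : |2 * f t * f' t - c * f t ^ 2| ≤ |2 * f t * f' t| + |c * f t ^ 2| := by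
      rw [sub_eq_add_neg]
      exact (abs_add_le _ _).trans (by rw [abs_neg])
    have e4 : |2 * f t * f' t| ≤ 2 * (M * M') := by
      rw [mul_assoc, abs_mul, abs_two]
      exact mul_le_mul_of_nonneg_left e1 (by norm_num)
    have e5 : |c * f t ^ 2| ≤ c * M ^ 2 := by
      rw [abs_mul, abs_of_pos hc, abs_of_nonneg (sq_nonneg _)]
      exact mul_le_mul_of_nonneg_left e2 hc.le
    linarith
  have hg'int : IntegrableOn g' (Ioi (0:ℝ)) := by
    apply Integrable.mono'
      ((exp_neg_integrableOn_Ioi 0 hc).const_mul (2 * (M * M') + c * M ^ 2)) hg'm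
    rw [ae_restrict_iff' measurableSet_Ioi]
    refine Filter.Eventually.of_forall fun t ht => ?_
    have hexp : (0:ℝ) < Real.exp (-c * t) := Real.exp_pos _
    rw [Real.norm_eq_abs]
    simp only [hg'def]
    rw [abs_mul, abs_of_pos hexp]
    exact mul_le_mul_of_nonneg_right (habs t ht) hexp.le
  -- tendsto 0
  have hexp0 : Tendsto (fun t : ℝ => Real.exp (-c * t)) atTop (nhds 0) := by
    rw [Real.tendsto_exp_comp_nhds_zero]
    exact (tendsto_const_mul_atBot_of_neg (neg_lt_zero.mpr hc)).mpr tendsto_id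
  have htend : Tendsto g atTop (nhds 0) := by
    refine squeeze_zero_norm' (a := fun t => M ^ 2 * Real.exp (-c * t)) ?_ ?_
    · filter_upwards [eventually_ge_atTop (0:ℝ)] with t ht
      have e2 : f t ^ 2 ≤ M ^ 2 := by
        calc f t ^ 2 = |f t| ^ 2 := (sq_abs _).symm
          _ ≤ M ^ 2 := pow_le_pow_left₀ (abs_nonneg _) (hM t ht) 2
      rw [Real.norm_eq_abs]
      simp only [hgdef]
      rw [abs_mul, abs_of_pos (Real.exp_pos _), abs_of_nonneg (sq_nonneg _)]
      exact mul_le_mul_of_nonneg_right e2 (Real.exp_pos _).le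
    · simpa using hexp0.const_mul (M ^ 2)
  -- continuity at 0
  have hcont : ContinuousWithinAt g (Ici 0) 0 := by
    apply ContinuousOn.continuousWithinAt _ (self_mem_Ici)
    exact (hf_cont.pow 2).mul
      ((Real.continuous_exp.comp (continuous_const.mul continuous_id)).continuousOn)
  -- FTC
  have hint : ∫ t in Ioi (0:ℝ), g' t = 0 - g 0 :=
    integral_Ioi_of_hasDerivAt_of_tendsto hcont hgderiv hg'int htend
  have hg0 : g 0 = f 0 ^ 2 := by simp [hgdef]
  have hval : ∫ t in Ioi (0:ℝ), -g' t = f 0 ^ 2 := by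
    rw [integral_neg, hint, hg0]; ring
  -- integrability of the main integrand
  have hhm : AEStronglyMeasurable (fun t => (f t ^ 2 + f' t ^ 2) * Real.exp (-c * t))
      (volume.restrict (Ioi (0:ℝ))) := ((hfm.pow 2).add (hf'm.pow 2)).mul hexpm
  have hhint : IntegrableOn (fun t => (f t ^ 2 + f' t ^ 2) * Real.exp (-c * t)) (Ioi (0:ℝ)) := by
    apply Integrable.mono'
      ((exp_neg_integrableOn_Ioi 0 hc).const_mul (M ^ 2 + M' ^ 2)) hhm
    rw [ae_restrict_iff' measurableSet_Ioi]
    refine Filter.Eventually.of_forall fun t ht => ?_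
    have hexp : (0:ℝ) < Real.exp (-c * t) := Real.exp_pos _
    have e2 : f t ^ 2 ≤ M ^ 2 := by
      calc f t ^ 2 = |f t| ^ 2 := (sq_abs _).symm
        _ ≤ M ^ 2 := pow_le_pow_left₀ (abs_nonneg _) (hM t (mem_Ici.mpr (le_of_lt ht))) 2
    have e2' : f' t ^ 2 ≤ M' ^ 2 := by
      calc f' t ^ 2 = |f' t| ^ 2 := (sq_abs _).symm
        _ ≤ M' ^ 2 := pow_le_pow_left₀ (abs_nonneg _) (hM' t (mem_Ici.mpr (le_of_lt ht))) 2
    rw [Real.norm_eq_abs, abs_mul, abs_of_pos hexp,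
      abs_of_nonneg (by positivity : (0:ℝ) ≤ f t ^ 2 + f' t ^ 2)]
    apply mul_le_mul_of_nonneg_right (by linarith) hexp.le
  -- comparison
  have hmono : ∫ t in Ioi (0:ℝ), -g' t
      ≤ ∫ t in Ioi (0:ℝ), (c + 1) * ((f t ^ 2 + f' t ^ 2) * Real.exp (-c * t)) := by
    apply setIntegral_mono_on hg'int.neg (hhint.const_mul (c + 1)) measurableSet_Ioi
    intro t ht
    simp only [Pi.neg_apply, hg'def]
    nlinarith [mul_nonneg (add_nonneg (sq_nonneg (f t + f' t))
      (mul_nonneg hc.le (sq_nonneg (f' t)))) (Real.exp_pos (-c * t)).le]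
  rw [ge_iff_le, div_le_iff₀ (by linarith : (0:ℝ) < c + 1)]
  calc f 0 ^ 2 = ∫ t in Ioi (0:ℝ), -g' t := hval.symm
    _ ≤ ∫ t in Ioi (0:ℝ), (c + 1) * ((f t ^ 2 + f' t ^ 2) * Real.exp (-c * t)) := hmono
    _ = (c + 1) * ∫ t in Ioi (0:ℝ), (f t ^ 2 + f' t ^ 2) * Real.exp (-c * t) :=
        integral_const_mul _ _
    _ = (∫ t in Ioi (0:ℝ), (f t ^ 2 + f' t ^ 2) * Real.exp (-c * t)) * (c + 1) := mul_comm _ _
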